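/- arXiv:1810.05325 — 2 statements merged into one kernel-verified Lean document; each statement's English description precedes it below -/
import Mathlib

section
/- Let N_w ≥ 1 be a natural number, τ_w ∈ (0,1), and σ, T_s, T_c > 0 be reals. Set B = (1−τ_w)^{N_w} and C = N_w·τ_w·(1−τ_w)^{N_w−1}, and for τ_L ∈ [0,1) define p_T(τ_L) = 1 − B·(1−τ_L), p_s(τ_L) = C·(1−τ_L)/p_T(τ_L), and t_s^w(τ_L) = (p_T·p_s·T_s) / ((1−p_T)·σ + p_T·p_s·T_s + p_T·(1−p_s)·T_c) evaluated at τ_L (equivalently, t_s^w(τ_L) = C·(1−τ_L)·T_s / (B·(1−τ_L)·σ + C·(1−τ_L)·T_s + (1 − (B+C)·(1−τ_L))·T_c)). Then t_s^w is a strictly monotonically decreasing function of τ_L on [0,1). (Since a larger LTE-U contention window Z yields a smaller LTE-U transmission probability τ_L, this is the paper's claim that a greater CW size Z comes with a higher Wi-Fi channel occupancy time ratio.) -/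
lemma aux_pow_bound (m : ℕ) (t : ℝ) (_h0 : 0 ≤ t) (h1 : t ≤ 1) :
    (1 - t) ^ m * (1 + m * t) ≤ 1 := by
  induction m with
  | zero => simp
  | succ n ih =>
    have hpow : 0 ≤ (1 - t) ^ n := pow_nonneg (by linarith) n
    have : (1 - t) ^ (n + 1) * (1 + (n + 1 : ℕ) * t)
        = (1 - t) ^ n * (1 + n * t) - (1 - t) ^ n * ((n + 1) * t ^ 2) := by
      push_cast; ring
    rw [this]
    nlinarith [sq_nonneg t, mul_nonneg hpow (mul_nonneg (by positivity : (0:ℝ) ≤ (n:ℝ)+1) (sq_nonneg t))]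

lemma wifi_aux (B C σ Ts Tc : ℝ) (hB : 0 < B) (hB1 : B < 1) (hC : 0 < C)
    (hBC : B + C ≤ 1) (hσ : 0 < σ) (hTs : 0 < Ts) (hTc : 0 < Tc) :
    StrictAntiOn
      (fun τL : ℝ =>
        ((1 - B * (1 - τL)) * (C * (1 - τL) / (1 - B * (1 - τL))) * Ts) /
          ((1 - (1 - B * (1 - τL))) * σ
            + (1 - B * (1 - τL)) * (C * (1 - τL) / (1 - B * (1 - τL))) * Ts
            + (1 - B * (1 - τL)) * (1 - C * (1 - τL) / (1 - B * (1 - τL))) * Tc))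
      (Set.Ico 0 1) := by
  have key : ∀ z ∈ Set.Ico (0:ℝ) 1,
      ((1 - B * (1 - z)) * (C * (1 - z) / (1 - B * (1 - z))) * Ts) /
          ((1 - (1 - B * (1 - z))) * σ
            + (1 - B * (1 - z)) * (C * (1 - z) / (1 - B * (1 - z))) * Ts
            + (1 - B * (1 - z)) * (1 - C * (1 - z) / (1 - B * (1 - z))) * Tc)
      = C * (1 - z) * Ts / (Tc + (1 - z) * (B * σ + C * Ts - (B + C) * Tc)) := by
    intro z ⟨hz0, hz1⟩
    have hu : 0 < 1 - z := by linarith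
    have hu1 : 1 - z ≤ 1 := by linarith
    have hpT : 0 < 1 - B * (1 - z) := by nlinarith
    have hexp : (1 - (1 - B * (1 - z))) * σ
          + (1 - B * (1 - z)) * (C * (1 - z) / (1 - B * (1 - z))) * Ts
          + (1 - B * (1 - z)) * (1 - C * (1 - z) / (1 - B * (1 - z))) * Tc
        = B * (1 - z) * σ + C * (1 - z) * Ts + (1 - (B + C) * (1 - z)) * Tc := by
      field_simp
      ring_nf
    have hnum : (1 - B * (1 - z)) * (C * (1 - z) / (1 - B * (1 - z))) * Ts
        = C * (1 - z) * Ts := by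
      field_simp
    rw [hexp, hnum]
    congr 1
    ring
  intro x hx y hy hxy
  simp only
  rw [key x hx, key y hy]
  obtain ⟨hx0, hx1⟩ := hx
  obtain ⟨hy0, hy1⟩ := hy
  have hux : 0 < 1 - x := by linarith
  have huy : 0 < 1 - y := by linarith
  have hDx : 0 < Tc + (1 - x) * (B * σ + C * Ts - (B + C) * Tc) := by
    have h1 : 0 ≤ 1 - (B + C) * (1 - x) := by nlinarith
    nlinarith [mul_pos (mul_pos hB hux) hσ, mul_pos (mul_pos hC hux) hTs,
      mul_nonneg h1 hTc.le]
  have hDy : 0 < Tc + (1 - y) * (B * σ + C * Ts - (B + C) * Tc) := by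
    have h1 : 0 ≤ 1 - (B + C) * (1 - y) := by nlinarith
    nlinarith [mul_pos (mul_pos hB huy) hσ, mul_pos (mul_pos hC huy) hTs,
      mul_nonneg h1 hTc.le]
  rw [div_lt_div_iff₀ hDy hDx]
  nlinarith [mul_pos (mul_pos hC hTs) hTc]

/-- Wi-Fi's channel occupancy time ratio is strictly decreasing in the
LTE-U transmission probability `τ_L` on `[0,1)`. -/
theorem wifi_occupancy_strictAntiOn_tauL
    (Nw : ℕ) (hNw : 1 ≤ Nw) (τw : ℝ) (hτw0 : 0 < τw) (hτw1 : τw < 1)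
    (σ Ts Tc : ℝ) (hσ : 0 < σ) (hTs : 0 < Ts) (hTc : 0 < Tc) :
    StrictAntiOn
      (fun τL : ℝ =>
        let B := (1 - τw) ^ Nw
        let C := (Nw : ℝ) * τw * (1 - τw) ^ (Nw - 1)
        let pT := 1 - B * (1 - τL)
        let ps := C * (1 - τL) / pT
        (pT * ps * Ts) / ((1 - pT) * σ + pT * ps * Ts + pT * (1 - ps) * Tc))
      (Set.Ico 0 1) := by
  have htw : 0 < 1 - τw := by linarith
  have hBpos : 0 < (1 - τw) ^ Nw := pow_pos htw Nw
  have hB1 : (1 - τw) ^ Nw < 1 := pow_lt_one₀ (by linarith) (by linarith) (by omega)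
  have hNwpos : (0:ℝ) < (Nw : ℝ) := by exact_mod_cast hNw
  have hCpos : 0 < (Nw : ℝ) * τw * (1 - τw) ^ (Nw - 1) :=
    mul_pos (mul_pos hNwpos hτw0) (pow_pos htw _)
  have hBC : (1 - τw) ^ Nw + (Nw : ℝ) * τw * (1 - τw) ^ (Nw - 1) ≤ 1 := by
    obtain ⟨m, rfl⟩ : ∃ m, Nw = m + 1 := ⟨Nw - 1, by omega⟩
    have h := aux_pow_bound m τw hτw0.le hτw1.le
    have heq : (1 - τw) ^ (m + 1) + ((m + 1 : ℕ) : ℝ) * τw * (1 - τw) ^ (m + 1 - 1)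
        = (1 - τw) ^ m * (1 + m * τw) := by
      simp only [Nat.add_sub_cancel]
      push_cast
      ring
    linarith [heq ▸ h]
  exact wifi_aux _ _ σ Ts Tc hBpos hB1 hCpos hBC hσ hTs hTc
end

section
/- Let N_w ≥ 1 be a natural number and τ_w ∈ (0,1). Set B = (1−τ_w)^{N_w} and C = N_w·τ_w·(1−τ_w)^{N_w−1}. Then the conditional Wi-Fi success probability p_s^w(τ_L) = C·(1−τ_L)/(1 − B·(1−τ_L)) is a strictly monotonically decreasing function of τ_L on [0,1). That is, a more aggressive LTE-U channel access (larger τ_L) strictly reduces the probability that a channel access attempt results in a successful Wi-Fi transmission. -/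
/-- The conditional Wi-Fi success probability
`p_s^w(τ_L) = C·(1−τ_L)/(1 − B·(1−τ_L))` is strictly decreasing in
`τ_L` on `[0,1)`. -/
theorem wifi_success_prob_strictAntiOn_tauL
    (Nw : ℕ) (hNw : 1 ≤ Nw) (τw : ℝ) (hτw0 : 0 < τw) (hτw1 : τw < 1) :
    StrictAntiOn
      (fun τL : ℝ =>
        ((Nw : ℝ) * τw * (1 - τw) ^ (Nw - 1)) * (1 - τL) /
          (1 - (1 - τw) ^ Nw * (1 - τL)))
      (Set.Ico 0 1) := by
  intro s hs t ht hst
  obtain ⟨hs0, hs1⟩ := hs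
  obtain ⟨ht0, ht1⟩ := ht
  have hB0 : (0:ℝ) < (1 - τw) ^ Nw := pow_pos (by linarith) _
  have hB1 : (1 - τw) ^ Nw < 1 :=
    pow_lt_one₀ (by linarith) (by linarith) (by omega)
  have hC0 : (0:ℝ) < (Nw : ℝ) * τw * (1 - τw) ^ (Nw - 1) := by
    have : (0:ℝ) < (Nw : ℝ) := by exact_mod_cast Nat.pos_of_ne_zero (by omega)
    have h2 : (0:ℝ) < (1 - τw) ^ (Nw - 1) := pow_pos (by linarith) _
    exact mul_pos (mul_pos this hτw0) h2
  have hds : 0 < 1 - (1 - τw) ^ Nw * (1 - s) := by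
    nlinarith [mul_le_of_le_one_right hB0.le (by linarith : (1:ℝ) - s ≤ 1)]
  have hdt : 0 < 1 - (1 - τw) ^ Nw * (1 - t) := by
    nlinarith [mul_le_of_le_one_right hB0.le (by linarith : (1:ℝ) - t ≤ 1)]
  simp only
  rw [div_lt_div_iff₀ hdt hds]
  nlinarith [hC0, hB0, hst]
end
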